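/- arXiv:2103.05117 — 2 statements merged into one kernel-verified Lean document; each statement's English description precedes it below -/
import Mathlib

section
/- The Mix Axiom is valid: for all formulas α, φ, every nominal n, every model M and point s, if M, s ⊨ E(n ∧ α) ∧ ⟨!¬n⟩φ then M, s ⊨ ⟨-α⟩φ. (Here E(n ∧ α) says some point is named n and satisfies α; ⟨!¬n⟩φ says s survives relativization to the points not named n and φ holds there.) -/
/-- MLSR with nominals, public announcement, and the global modality:
φ ::= p | n | ⊤ | ¬φ | φ∨φ | ◇φ | ⟨!φ⟩φ | ⟨-φ⟩φ | Eφ. -/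
inductive Form : Type where
  | atom : ℕ → Form
  | nom : ℕ → Form
  | top : Form
  | neg : Form → Form
  | or : Form → Form → Form
  | dia : Form → Form
  | ann : Form → Form → Form
  | rem : Form → Form → Form
  | E : Form → Form

/-- A relational model with a valuation for proposition letters and a partial
naming function for nominals (each nominal names at most one point). -/
structure Model (W : Type) where
  R : W → W → Prop
  V : ℕ → W → Prop
  Nm : ℕ → Option W

/-- Truth relative to a current domain `D` (submodel semantics): announcement
⟨!φ⟩ψ restricts the domain to the points satisfying φ, removal ⟨-φ⟩ψ deletes a
single φ-point distinct from the current one, E is the global modality. -/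
def Sat {W : Type} (M : Model W) : Form → Set W → W → Prop
  | .atom p, _, s => M.V p s
  | .nom n, _, s => M.Nm n = some s
  | .top, _, _ => True
  | .neg φ, D, s => ¬ Sat M φ D s
  | .or φ ψ, D, s => Sat M φ D s ∨ Sat M ψ D s
  | .dia φ, D, s => ∃ t ∈ D, M.R s t ∧ Sat M φ D t
  | .ann φ ψ, D, s => Sat M φ D s ∧ Sat M ψ {t | t ∈ D ∧ Sat M φ D t} s
  | .rem φ ψ, D, s => ∃ t ∈ D, t ≠ s ∧ Sat M φ D t ∧ Sat M ψ (D \ {t}) s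
  | .E φ, D, _ => ∃ t ∈ D, Sat M φ D t

/-- Conjunction, defined from ¬ and ∨. -/
def Form.and (a b : Form) : Form := .neg (.or (.neg a) (.neg b))

/-- Validity of the Mix Axiom: (E(n ∧ α) ∧ ⟨!¬n⟩φ) → ⟨-α⟩φ. -/
theorem stmt7 {W : Type} (M : Model W) (D : Set W) (s : W) (n : ℕ) (α φ : Form) :
    Sat M (Form.and (.E (Form.and (.nom n) α)) (.ann (.neg (.nom n)) φ)) D s →
      Sat M (.rem α φ) D s := by
  intro h
  simp only [Form.and, Sat, not_or, not_not] at h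
  obtain ⟨⟨t, htD, hnt, hαt⟩, hns, hφ⟩ := h
  refine ⟨t, htD, ?_, hαt, ?_⟩
  · rintro rfl; exact hns hnt
  · have : {u | u ∈ D ∧ ¬ M.Nm n = some u} = D \ {t} := by
      ext u
      simp only [Set.mem_setOf_eq, Set.mem_diff, Set.mem_singleton_iff]
      constructor
      · rintro ⟨hu, hnu⟩; exact ⟨hu, fun h => hnu (h ▸ hnt)⟩
      · rintro ⟨hu, hne⟩
        refine ⟨hu, fun h => hne ?_⟩
        rw [hnt] at h; exact (Option.some_injective _ h).symm
    rwa [← this]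
end

section
/- Announcement and removal modalities do not commute in the expected recursion pattern: the formulas ⟨!α⟩⟨-φ⟩ψ and α ∧ ⟨-⟨!α⟩φ⟩⟨!α⟩ψ are not equivalent. Specifically, with α = ◇p, φ = □⊥, ψ = ⊤, there is a model and point where one holds and the other fails. -/
def M3 : Model (Fin 3) where
  R x y := (x = 0 ∧ y = 1) ∨ (x = 1 ∧ y = 2)
  V _ x := x = 1 ∨ x = 2
  Nm _ := none

/-- With α = ◇p, φ = □⊥ (= ¬◇⊤), ψ = ⊤, the formulas ⟨!α⟩⟨-φ⟩ψ and
α ∧ ⟨-⟨!α⟩φ⟩⟨!α⟩ψ are not equivalent: some pointed model separates them. -/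
theorem stmt13 :
    ∃ (W : Type) (M : Model W) (s : W),
      ¬ (Sat M (.ann (.dia (.atom 0)) (.rem (.neg (.dia .top)) .top)) Set.univ s ↔
         Sat M (Form.and (.dia (.atom 0))
            (.rem (.ann (.dia (.atom 0)) (.neg (.dia .top)))
                  (.ann (.dia (.atom 0)) .top))) Set.univ s) := by
  refine ⟨Fin 3, M3, 0, fun h => ?_⟩
  have hleft : Sat M3 (.ann (.dia (.atom 0)) (.rem (.neg (.dia .top)) .top)) Set.univ 0 := by
    refine ⟨⟨1, trivial, Or.inl ⟨rfl, rfl⟩, Or.inl rfl⟩, ⟨1, ?_, by decide, ?_, trivial⟩⟩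
    · exact ⟨trivial, ⟨2, trivial, Or.inr ⟨rfl, rfl⟩, Or.inr rfl⟩⟩
    · rintro ⟨u, ⟨-, hu⟩, hR, -⟩
      rcases hR with ⟨h1, -⟩ | ⟨-, h2⟩
      · exact absurd h1 (by decide)
      · subst h2
        rcases hu with ⟨v, -, hR2, -⟩
        rcases hR2 with ⟨h, -⟩ | ⟨h, -⟩ <;> exact absurd h (by decide)
  have hright := h.mp hleft
  apply hright
  show _ ∨ _
  refine Or.inr fun hb => ?_
  obtain ⟨t, -, hts, ⟨⟨u, -, hRtu, -⟩, hbox⟩, ⟨v, ⟨-, hvt⟩, hRv, -⟩, -⟩ := hb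
  have hv1 : v = 1 := by rcases hRv with ⟨-, h⟩ | ⟨h, -⟩; exact h; exact absurd h (by decide)
  subst hv1
  have ht1 : t ≠ 1 := fun h => hvt (by simp [h])
  rcases hRtu with ⟨ht0, -⟩ | ⟨ht1', -⟩
  · exact hts ht0
  · exact ht1 ht1'
end
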